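/- Let B² = B + B = {b₁ + b₂ : b₁, b₂ ∈ B}. For a block w : B² → A define F(w) : B → A by F(w)(v) = f(b ↦ w(v + b)), and Σφ(F(w)) = ∑_{v ∈ B} φ(F(w)(v)). Assume φ⁻¹({0}) ≠ ∅ and that the local rule f is vacuum-preserving. Then φ is conserved by F if and only if for all blocks w, w' : B² → A that agree at every point of B² except possibly at 0, one has Σφ(F(w')) − Σφ(F(w)) = φ(w'(0)) − φ(w(0)). -/

import Mathlib

open scoped Pointwise

/-- The cellular automaton induced by a local rule `f` on neighbourhood `B`. -/
def induce {X A : Type*} [AddCommGroup X] (B : Finset X) (f : (B → A) → A)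
    (a : X → A) : X → A :=
  fun x => f fun b => a (x + b.1)

/-- `ψ` is conserved by the CA induced by `f` on `B`. -/
def conserved {X A Z : Type*} [AddCommGroup X] [AddCommMonoid Z] (B : Finset X)
    (f : (B → A) → A) (ψ : A → Z) : Prop :=
  (∃ a : A, ψ a = 0) ∧
  (∀ a : X → A, (Function.support fun x => ψ (a x)).Finite →
      (Function.support fun x => ψ (induce B f a x)).Finite) ∧
  (∀ a : X → A, (Function.support fun x => ψ (a x)).Finite →
      ∑ᶠ x, ψ (induce B f a x) = ∑ᶠ x, ψ (a x))

lemma finsum_sub_eq_sum_of_eqOff {X : Type*} [DecidableEq X] (g g' : X → ℝ)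
    (hg : (Function.support g).Finite) (hg' : (Function.support g').Finite)
    (T : Finset X) (h : ∀ x, x ∉ T → g x = g' x) :
    ∑ᶠ x, g' x - ∑ᶠ x, g x = ∑ x ∈ T, (g' x - g x) := by
  classical
  have hgS : Function.support g ⊆ ↑(hg.toFinset ∪ hg'.toFinset ∪ T) := by
    intro x hx
    simp only [Finset.coe_union, Set.mem_union, Finset.mem_coe, Set.Finite.mem_toFinset]
    exact Or.inl (Or.inl hx)
  have hg'S : Function.support g' ⊆ ↑(hg.toFinset ∪ hg'.toFinset ∪ T) := by
    intro x hx
    simp only [Finset.coe_union, Set.mem_union, Finset.mem_coe, Set.Finite.mem_toFinset]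
    exact Or.inl (Or.inr hx)
  rw [finsum_eq_finset_sum_of_support_subset _ hgS,
      finsum_eq_finset_sum_of_support_subset _ hg'S,
      ← Finset.sum_sub_distrib]
  refine (Finset.sum_subset Finset.subset_union_right ?_).symm
  intro x _ hxT
  rw [h x hxT]; ring

lemma support_induce_finite {X A : Type*} [AddCommGroup X] [DecidableEq X]
    (B : Finset X) (hBsym : ∀ b : X, b ∈ B ↔ -b ∈ B) (f : (B → A) → A) (φ : A → ℝ)
    (hfvac : ∀ w : B → A, (∀ b, φ (w b) = 0) → φ (f w) = 0)
    (a : X → A) (ha : (Function.support fun x => φ (a x)).Finite) :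
    (Function.support fun x => φ (induce B f a x)).Finite := by
  classical
  refine Set.Finite.subset (Finset.finite_toSet (ha.toFinset + B)) ?_
  intro x hx
  have hx' : ¬ ∀ b : B, φ (a (x + b.1)) = 0 := fun h => hx (hfvac _ h)
  push_neg at hx'
  obtain ⟨b, hb⟩ := hx'
  refine Finset.mem_coe.mpr ?_
  rw [Finset.mem_add]
  exact ⟨x + b.1, ha.mem_toFinset.mpr hb, -b.1, (hBsym b.1).mp b.2, by abel⟩

theorem stmt0 {X A : Type*} [AddCommGroup X] [DecidableEq X] [Fintype A] [Nonempty A]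
    (B : Finset X) (hB0 : (0 : X) ∈ B) (hBsym : ∀ b : X, b ∈ B ↔ -b ∈ B)
    (f : (B → A) → A) (φ : A → ℝ)
    (hvac : ∃ a : A, φ a = 0)
    (hfvac : ∀ w : B → A, (∀ b, φ (w b) = 0) → φ (f w) = 0) :
    conserved B f φ ↔
      ∀ w w' : ((B + B : Finset X) : Type _) → A,
        (∀ v : ((B + B : Finset X) : Type _), (v : X) ≠ 0 → w v = w' v) →
        ((∑ v : B, φ (f fun b => w' ⟨v.1 + b.1, Finset.add_mem_add v.2 b.2⟩)) -
          ∑ v : B, φ (f fun b => w ⟨v.1 + b.1, Finset.add_mem_add v.2 b.2⟩))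
          = φ (w' ⟨0, by simpa using Finset.add_mem_add hB0 hB0⟩) -
            φ (w ⟨0, by simpa using Finset.add_mem_add hB0 hB0⟩) := by
  classical
  obtain ⟨v₀, hv₀⟩ := hvac
  have h0BB : (0 : X) ∈ B + B := by simpa using Finset.add_mem_add hB0 hB0
  constructor
  · rintro ⟨-, hfin, hsum⟩ w w' hww'
    set a : X → A := fun x => if h : x ∈ B + B then w ⟨x, h⟩ else v₀ with ha_def
    set a' : X → A := fun x => if h : x ∈ B + B then w' ⟨x, h⟩ else v₀ with ha'_def
    have hsa : (Function.support fun x => φ (a x)).Finite := by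
      refine Set.Finite.subset (Finset.finite_toSet (B + B)) ?_
      intro x hx
      by_contra hmem
      exact hx (by simp [ha_def, dif_neg (fun h => hmem (Finset.mem_coe.mpr h)), hv₀])
    have hsa' : (Function.support fun x => φ (a' x)).Finite := by
      refine Set.Finite.subset (Finset.finite_toSet (B + B)) ?_
      intro x hx
      by_contra hmem
      exact hx (by simp [ha'_def, dif_neg (fun h => hmem (Finset.mem_coe.mpr h)), hv₀])
    have haa' : ∀ y : X, y ≠ 0 → a y = a' y := by
      intro y hy
      by_cases h : y ∈ B + B
      · simp only [ha_def, ha'_def, dif_pos h]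
        exact hww' ⟨y, h⟩ hy
      · simp [ha_def, ha'_def, dif_neg h]
    have hFeq : ∀ x : X, x ∉ B → induce B f a x = induce B f a' x := by
      intro x hx
      refine congrArg f (funext fun b => ?_)
      refine haa' _ fun h0 => hx ?_
      have hb : b.1 = -x := eq_neg_of_add_eq_zero_right h0
      exact (hBsym x).mpr (hb ▸ b.2)
    have hFa := hfin a hsa
    have hFa' := hfin a' hsa'
    have E2 := finsum_sub_eq_sum_of_eqOff (fun x => φ (induce B f a x))
      (fun x => φ (induce B f a' x)) hFa hFa' B
      (fun x hx => by rw [hFeq x hx])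
    have E1 := finsum_sub_eq_sum_of_eqOff (fun x => φ (a x)) (fun x => φ (a' x))
      hsa hsa' {0} (fun x hx => by rw [haa' x (by simpa using hx)])
    rw [hsum a hsa, hsum a' hsa'] at E2
    rw [E1] at E2
    have ha0 : a 0 = w ⟨0, h0BB⟩ := dif_pos h0BB
    have ha'0 : a' 0 = w' ⟨0, h0BB⟩ := dif_pos h0BB
    have hgoalL : ∀ v : B, (f fun b => w' ⟨v.1 + b.1, Finset.add_mem_add v.2 b.2⟩)
        = induce B f a' v.1 := by
      intro v
      refine congrArg f (funext fun b => ?_)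
      simp only [ha'_def]
      rw [dif_pos (Finset.add_mem_add v.2 b.2)]
    have hgoalR : ∀ v : B, (f fun b => w ⟨v.1 + b.1, Finset.add_mem_add v.2 b.2⟩)
        = induce B f a v.1 := by
      intro v
      refine congrArg f (funext fun b => ?_)
      simp only [ha_def]
      rw [dif_pos (Finset.add_mem_add v.2 b.2)]
    calc (∑ v : B, φ (f fun b => w' ⟨v.1 + b.1, Finset.add_mem_add v.2 b.2⟩)) -
          ∑ v : B, φ (f fun b => w ⟨v.1 + b.1, Finset.add_mem_add v.2 b.2⟩)
        = (∑ v : B, φ (induce B f a' v.1)) - ∑ v : B, φ (induce B f a v.1) := by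
          simp only [hgoalL, hgoalR]
      _ = ∑ x ∈ B, (φ (induce B f a' x) - φ (induce B f a x)) := by
          rw [Finset.sum_sub_distrib]
          congr 1
          · exact Finset.sum_coe_sort B (fun x => φ (induce B f a' x))
          · exact Finset.sum_coe_sort B (fun x => φ (induce B f a x))
      _ = φ (w' ⟨0, h0BB⟩) - φ (w ⟨0, h0BB⟩) := by
          rw [← E2]
          simp only [Finset.sum_singleton]
          rw [ha0, ha'0]
  · intro H
    refine ⟨⟨v₀, hv₀⟩, fun a ha => support_induce_finite B hBsym f φ hfvac a ha, ?_⟩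
    suffices key : ∀ n : ℕ, ∀ a : X → A,
        ∀ ha : (Function.support fun x => φ (a x)).Finite,
        ha.toFinset.card ≤ n → ∑ᶠ x, φ (induce B f a x) = ∑ᶠ x, φ (a x) by
      intro a ha
      exact key _ a ha le_rfl
    intro n
    induction n with
    | zero =>
      intro a ha hcard
      have hz : ∀ x, φ (a x) = 0 := by
        intro x
        by_contra h
        have hx : x ∈ ha.toFinset := ha.mem_toFinset.mpr h
        rw [Finset.card_eq_zero.mp (Nat.le_zero.mp hcard)] at hx
        exact absurd hx (Finset.notMem_empty x)
      have hz2 : ∀ x, φ (induce B f a x) = 0 := fun x => hfvac _ fun b => hz _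
      simp only [hz, hz2, finsum_zero]
    | succ n ih =>
      intro a ha hcard
      by_cases hle : ha.toFinset.card ≤ n
      · exact ih a ha hle
      obtain ⟨x₀, hx₀⟩ : ha.toFinset.Nonempty := Finset.card_pos.mp (by omega)
      have hx₀' : φ (a x₀) ≠ 0 := ha.mem_toFinset.mp hx₀
      set a' : X → A := Function.update a x₀ v₀ with ha'def
      have ha'eq : ∀ x : X, x ≠ x₀ → a' x = a x := fun x hx =>
        Function.update_of_ne hx _ _
      have ha'x₀ : a' x₀ = v₀ := Function.update_self _ _ _
      have hsub : (Function.support fun x => φ (a' x)) ⊆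
          (Function.support fun x => φ (a x)) \ {x₀} := by
        intro x hx
        rcases eq_or_ne x x₀ with rfl | hne
        · refine absurd ?_ hx
          show φ (a' x) = 0
          rw [ha'x₀]; exact hv₀
        · refine ⟨?_, hne⟩
          show φ (a x) ≠ 0
          have hx2 : φ (a' x) ≠ 0 := hx
          rwa [ha'eq x hne] at hx2
      have ha' : (Function.support fun x => φ (a' x)).Finite :=
        Set.Finite.subset ha (hsub.trans Set.diff_subset)
      have hcard' : ha'.toFinset.card ≤ n := by
        have hss : ha'.toFinset ⊆ ha.toFinset.erase x₀ := by
          intro x hx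
          have := hsub (ha'.mem_toFinset.mp hx)
          exact Finset.mem_erase.mpr ⟨this.2, ha.mem_toFinset.mpr this.1⟩
        have h1 := Finset.card_le_card hss
        have h2 := Finset.card_erase_of_mem hx₀
        omega
      have hih := ih a' ha' hcard'
      -- the blocks
      have hkey := H (fun v => a' (x₀ + v.1)) (fun v => a (x₀ + v.1))
        (fun v hv => ha'eq _ (fun hc => hv (add_eq_left.mp hc)))
      have hrw' : ∀ v : B, (f fun b => a (x₀ + (v.1 + b.1))) = induce B f a (x₀ + v.1) := by
        intro v
        refine congrArg f (funext fun b => ?_)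
        rw [add_assoc]
      have hrw : ∀ v : B, (f fun b => a' (x₀ + (v.1 + b.1))) = induce B f a' (x₀ + v.1) := by
        intro v
        refine congrArg f (funext fun b => ?_)
        rw [add_assoc]
      simp only [hrw, hrw', add_zero] at hkey
      rw [ha'x₀, hv₀, sub_zero] at hkey
      -- finsum manipulations
      have hFa := support_induce_finite B hBsym f φ hfvac a ha
      have hFa' := support_induce_finite B hBsym f φ hfvac a' ha'
      have E1 := finsum_sub_eq_sum_of_eqOff (fun x => φ (a' x)) (fun x => φ (a x))
        ha' ha {x₀} (fun x hx => by rw [ha'eq x (by simpa using hx)])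
      have E2 := finsum_sub_eq_sum_of_eqOff (fun x => φ (induce B f a' x))
        (fun x => φ (induce B f a x)) hFa' hFa (B.image (x₀ + ·)) ?_
      · rw [Finset.sum_image (fun c _ c' _ h => add_left_cancel h)] at E2
        have hsum_eq : ∑ c ∈ B, (φ (induce B f a (x₀ + c)) - φ (induce B f a' (x₀ + c)))
            = φ (a x₀) := by
          rw [← hkey, Finset.sum_sub_distrib]
          congr 1
          · exact (Finset.sum_coe_sort B (fun c => φ (induce B f a (x₀ + c)))).symm
          · exact (Finset.sum_coe_sort B (fun c => φ (induce B f a' (x₀ + c)))).symm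
        rw [hsum_eq] at E2
        simp only [Finset.sum_singleton] at E1
        rw [ha'x₀, hv₀, sub_zero] at E1
        linarith [E1, E2, hih]
      · intro x hx
        have : induce B f a' x = induce B f a x := by
          refine congrArg f (funext fun b => ?_)
          refine ha'eq _ fun hc => hx ?_
          refine Finset.mem_image.mpr ⟨-b.1, (hBsym b.1).mp b.2, ?_⟩
          rw [← hc]; abel
        rw [this]
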